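/- Let N ≥ 3 and k > 0. Suppose (k, C) ∈ ℝ² satisfies sin k = C·cos(k/2) and cos k - (N-1)·C·sin(k/2) = 0, with cos(k/2) ≠ 0. Then N·cos k = N - 1, i.e., k ≡ ±arccos((N-1)/N) (mod 2π). -/

import Mathlib

theorem stmt_7 (N : ℕ) (hN : 3 ≤ N) (k C : ℝ) (hk : 0 < k)
    (h1 : Real.sin k = C * Real.cos (k / 2))
    (h2 : Real.cos k - ((N : ℝ) - 1) * C * Real.sin (k / 2) = 0)
    (h3 : Real.cos (k / 2) ≠ 0) :
    (N : ℝ) * Real.cos k = (N : ℝ) - 1 := by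
  have hs : Real.sin k = 2 * Real.sin (k / 2) * Real.cos (k / 2) := by
    rw [← Real.sin_two_mul]; ring_nf
  have hC : C = 2 * Real.sin (k / 2) := by
    have := h1.symm.trans hs
    field_simp at this
    exact this
  have hc : Real.cos k = 1 - 2 * Real.sin (k / 2) ^ 2 := by
    have h4 : Real.cos k = 2 * Real.cos (k / 2) ^ 2 - 1 := by
      rw [← Real.cos_two_mul]; ring_nf
    nlinarith [Real.sin_sq_add_cos_sq (k / 2)]
  rw [hC] at h2
  nlinarith [h2, hc]
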